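/- Let d_b ≥ d_a ≥ 1 be integers and let Q = (q₀, q₁, q₂) ∈ 𝒬_{d_a} be fixed, with δ = deg gcd(q₀, q₁, q₂). Then the number of triples R = (r₀, r₁, r₂) ∈ ℛ_{d_b} satisfying q₀r₀ + q₁r₁ + q₂r₂ = 0 equals q^{2d_b − d_a + δ}. -/

import Mathlib

open Polynomial

/-- `Qset F d`: triples `(q₀, q₁, q₂)` of polynomials over `F` with `q₀` monic of degree `d`
and `q₁, q₂` of degree `< d`. -/
def Qset (F : Type*) [Field F] (d : ℕ) : Set (F[X] × F[X] × F[X]) :=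
  {t | t.1.Monic ∧ t.1.natDegree = d ∧
    t.2.1.degree < (d : WithBot ℕ) ∧ t.2.2.degree < (d : WithBot ℕ)}

/-- `Rset F d`: triples `(r₀, r₁, r₂)` of polynomials over `F` with `r₂` monic of degree `d`
and `r₀, r₁` of degree `< d`. -/
def Rset (F : Type*) [Field F] (d : ℕ) : Set (F[X] × F[X] × F[X]) :=
  {t | t.2.2.Monic ∧ t.2.2.natDegree = d ∧
    t.1.degree < (d : WithBot ℕ) ∧ t.2.1.degree < (d : WithBot ℕ)}

/-- A pair `(Q, R)` is intersecting if `q₀r₀ + q₁r₁ + q₂r₂ = 0`. -/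
def Intersecting {F : Type*} [Field F] (Q R : F[X] × F[X] × F[X]) : Prop :=
  Q.1 * R.1 + Q.2.1 * R.2.1 + Q.2.2 * R.2.2 = 0

/- ### Auxiliary lemmas -/

lemma aux_degLT_fd (F : Type*) [Field F] (n : ℕ) : FiniteDimensional F ↥(degreeLT F n) :=
  Module.Finite.equiv (degreeLTEquiv F n).symm

lemma aux_degLT_finrank (F : Type*) [Field F] (n : ℕ) :
    Module.finrank F ↥(degreeLT F n) = n := by
  rw [(degreeLTEquiv F n).finrank_eq, Module.finrank_fin_fun]

lemma aux_fiber_card {F : Type*} [Field F] [Fintype F] {V W : Type*} [AddCommGroup V]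
    [Module F V] [AddCommGroup W] [Module F W] [FiniteDimensional F V] [FiniteDimensional F W]
    (T : V →ₗ[F] W) (hT : Function.Surjective T) (c : W) :
    Nat.card {x : V // T x = c} =
      Fintype.card F ^ (Module.finrank F V - Module.finrank F W) := by
  obtain ⟨x₀, hx₀⟩ := hT c
  have e : {x : V // T x = c} ≃ LinearMap.ker T :=
    { toFun := fun x => ⟨x.1 - x₀, by simp [LinearMap.mem_ker, map_sub, x.2, hx₀]⟩
      invFun := fun y => ⟨y.1 + x₀, by
        have hy := y.2
        rw [LinearMap.mem_ker] at hy
        simp [map_add, hy, hx₀]⟩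
      left_inv := fun x => by ext; simp
      right_inv := fun y => by ext; simp }
  rw [Nat.card_congr e]
  have hker : Module.finrank F (LinearMap.ker T) =
      Module.finrank F V - Module.finrank F W := by
    have h2 := LinearMap.finrank_range_add_finrank_ker T
    rw [LinearMap.range_eq_top.mpr hT, finrank_top] at h2
    omega
  have : Fintype (LinearMap.ker T) := Module.fintypeOfFintype (Module.finBasis F _)
  rw [Nat.card_eq_fintype_card, Module.card_eq_pow_finrank (K := F), hker]

lemma aux_deg_mul_lt {F : Type*} [Field F] {p r : F[X]} {a b : ℕ}
    (hp : p.degree < (a : WithBot ℕ)) (hr : r.degree ≤ (b : WithBot ℕ)) :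
    (p * r).degree < ((a + b : ℕ) : WithBot ℕ) := by
  rcases eq_or_ne (p * r) 0 with h | h
  · rw [h, degree_zero]; exact WithBot.bot_lt_coe _
  have hp0 : p ≠ 0 := fun hh => h (by simp [hh])
  have hr0 : r ≠ 0 := fun hh => h (by simp [hh])
  rw [← natDegree_lt_iff_degree_lt h]
  have h1 : p.natDegree < a := (natDegree_lt_iff_degree_lt hp0).mpr hp
  have h2 : r.natDegree ≤ b := natDegree_le_iff_degree_le.mpr hr
  have := natDegree_mul_le (p := p) (q := r)
  omega

lemma aux_count_main {F : Type*} [Field F] [Fintype F] [DecidableEq F]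
    (a₀ a₁ a₂ : F[X]) (ha0mon : a₀.Monic) (db : ℕ) (hmdb : a₀.natDegree ≤ db)
    (ha1deg : a₁.degree < (a₀.natDegree : WithBot ℕ))
    (ha2deg : a₂.degree < (a₀.natDegree : WithBot ℕ))
    (hbez : ∃ u v w : F[X], u * a₀ + v * a₁ + w * a₂ = 1) :
    Nat.card {R : F[X] × F[X] × F[X] //
        R ∈ Rset F db ∧ a₀ * R.1 + a₁ * R.2.1 + a₂ * R.2.2 = 0} =
      Fintype.card F ^ (db + db - a₀.natDegree) := by
  classical
  have ha0ne : a₀ ≠ 0 := ha0mon.ne_zero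
  have ha0deg : a₀.degree = (a₀.natDegree : WithBot ℕ) := degree_eq_natDegree ha0ne
  haveI iD : FiniteDimensional F ↥(degreeLT F db) := aux_degLT_fd F db
  haveI iW : FiniteDimensional F ↥(degreeLT F a₀.natDegree) := aux_degLT_fd F a₀.natDegree
  set m := a₀.natDegree with hm
  -- the linear map
  let L : ↥(degreeLT F db) × ↥(degreeLT F db) →ₗ[F] F[X] :=
    (modByMonicHom a₀).comp
      (((LinearMap.mulLeft F a₁).comp ((degreeLT F db).subtype.comp (LinearMap.fst F _ _))) +
       ((LinearMap.mulLeft F a₂).comp ((degreeLT F db).subtype.comp (LinearMap.snd F _ _))))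
  have hLapp : ∀ x : ↥(degreeLT F db) × ↥(degreeLT F db),
      L x = (a₁ * (x.1 : F[X]) + a₂ * (x.2 : F[X])) %ₘ a₀ := fun x => rfl
  have hmemW : ∀ p : F[X], p %ₘ a₀ ∈ degreeLT F m := fun p => by
    rw [mem_degreeLT, ← ha0deg]; exact degree_modByMonic_lt p ha0mon
  let T : ↥(degreeLT F db) × ↥(degreeLT F db) →ₗ[F] ↥(degreeLT F m) :=
    L.codRestrict (degreeLT F m) (fun x => by rw [hLapp]; exact hmemW _)
  have hTapp : ∀ x, ((T x : F[X])) = (a₁ * (x.1 : F[X]) + a₂ * (x.2 : F[X])) %ₘ a₀ :=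
    fun x => rfl
  let c : ↥(degreeLT F m) := ⟨(-(a₂ * X ^ db)) %ₘ a₀, hmemW _⟩
  have hmodeq : ∀ p r : F[X], a₀ ∣ p - r → p %ₘ a₀ = r %ₘ a₀ := fun p r h => by
    have h0 := (modByMonic_eq_zero_iff_dvd ha0mon).mpr h
    rw [sub_modByMonic] at h0
    exact sub_eq_zero.mp h0
  -- surjectivity of T
  have hTsurj : Function.Surjective T := by
    intro cc
    obtain ⟨u, v, w, huvw⟩ := hbez
    have hmemD : ∀ p : F[X], p %ₘ a₀ ∈ degreeLT F db := fun p => by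
      rw [mem_degreeLT]
      exact lt_of_lt_of_le (ha0deg ▸ degree_modByMonic_lt p ha0mon)
        (by exact_mod_cast hmdb)
    refine ⟨(⟨(v * cc.1) %ₘ a₀, hmemD _⟩, ⟨(w * cc.1) %ₘ a₀, hmemD _⟩), ?_⟩
    apply Subtype.ext
    rw [hTapp]
    have hcc : (cc : F[X]) %ₘ a₀ = cc := (modByMonic_eq_self_iff ha0mon).mpr
      (by rw [ha0deg]; exact mem_degreeLT.mp cc.2)
    conv_rhs => rw [← hcc]
    apply hmodeq
    refine ⟨-(u * cc.1) - a₁ * ((v * cc.1) /ₘ a₀) - a₂ * ((w * cc.1) /ₘ a₀), ?_⟩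
    have e1 := modByMonic_add_div (v * cc.1) a₀
    have e2 := modByMonic_add_div (w * cc.1) a₀
    linear_combination a₁ * e1 + a₂ * e2 + cc.1 * huvw
  -- characterization of the fiber over `c`
  have hwmod : ∀ x : ↥(degreeLT F db) × ↥(degreeLT F db),
      (T x = c ↔ (a₁ * (x.1 : F[X]) + a₂ * (X ^ db + (x.2 : F[X]))) %ₘ a₀ = 0) := by
    intro x
    have key : (a₁ * (x.1 : F[X]) + a₂ * (x.2 : F[X])) %ₘ a₀ - (-(a₂ * X ^ db)) %ₘ a₀
        = (a₁ * (x.1 : F[X]) + a₂ * (X ^ db + (x.2 : F[X]))) %ₘ a₀ := by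
      rw [← sub_modByMonic]; congr 1; ring
    rw [Subtype.ext_iff, hTapp, show (c : F[X]) = (-(a₂ * X ^ db)) %ₘ a₀ from rfl,
      ← sub_eq_zero, key]
  have hwdeg : ∀ r₁ r₂ : F[X], r₁.degree ≤ (db : WithBot ℕ) → r₂.degree ≤ (db : WithBot ℕ) →
      (a₁ * r₁ + a₂ * r₂).degree < ((m + db : ℕ) : WithBot ℕ) := fun r₁ r₂ hh1 hh2 =>
    lt_of_le_of_lt (degree_add_le _ _) (max_lt (aux_deg_mul_lt ha1deg hh1)
      (aux_deg_mul_lt ha2deg hh2))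
  -- membership of the image triples
  have main : ∀ x : {x : ↥(degreeLT F db) × ↥(degreeLT F db) // T x = c},
      ((-( (a₁ * (x.1.1 : F[X]) + a₂ * (X ^ db + (x.1.2 : F[X]))) /ₘ a₀),
        ((x.1.1 : F[X]), X ^ db + (x.1.2 : F[X]))) : F[X] × F[X] × F[X]) ∈
      {R : F[X] × F[X] × F[X] | R ∈ Rset F db ∧ a₀ * R.1 + a₁ * R.2.1 + a₂ * R.2.2 = 0} := by
    rintro ⟨⟨x1, x2⟩, hx⟩
    have hP := (hwmod (x1, x2)).mp hx
    have hx1 : (x1 : F[X]).degree < (db : WithBot ℕ) := mem_degreeLT.mp x1.2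
    have hs : (x2 : F[X]).degree < (db : WithBot ℕ) := mem_degreeLT.mp x2.2
    have hr2mon : (X ^ db + (x2 : F[X])).Monic := monic_X_pow_add hs
    have hlt : (x2 : F[X]).degree < ((X : F[X]) ^ db).degree := by
      rw [degree_X_pow]; exact hs
    have hr2degeq : (X ^ db + (x2 : F[X])).degree = (db : WithBot ℕ) := by
      rw [degree_add_eq_left_of_degree_lt hlt, degree_X_pow]
    have hr2nat : (X ^ db + (x2 : F[X])).natDegree = db :=
      natDegree_eq_of_degree_eq_some hr2degeq
    have hwlt : (a₁ * (x1 : F[X]) + a₂ * (X ^ db + (x2 : F[X]))).degree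
        < ((m + db : ℕ) : WithBot ℕ) := hwdeg _ _ hx1.le (le_of_eq hr2degeq)
    have hr0deg :
        (-((a₁ * (x1 : F[X]) + a₂ * (X ^ db + (x2 : F[X]))) /ₘ a₀)).degree
          < (db : WithBot ℕ) := by
      rw [degree_neg]
      rcases eq_or_ne ((a₁ * (x1 : F[X]) + a₂ * (X ^ db + (x2 : F[X]))) /ₘ a₀) 0 with h | h
      · rw [h, degree_zero]; exact WithBot.bot_lt_coe _
      · rw [← natDegree_lt_iff_degree_lt h, natDegree_divByMonic _ ha0mon]
        have hw0 : a₁ * (x1 : F[X]) + a₂ * (X ^ db + (x2 : F[X])) ≠ 0 :=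
          fun hh => h (by rw [hh, zero_divByMonic])
        have h3 : (a₁ * (x1 : F[X]) + a₂ * (X ^ db + (x2 : F[X]))).natDegree < m + db :=
          (natDegree_lt_iff_degree_lt hw0).mpr hwlt
        omega
    refine ⟨⟨hr2mon, hr2nat, hr0deg, hx1⟩, ?_⟩
    have e := modByMonic_add_div (a₁ * (x1 : F[X]) + a₂ * (X ^ db + (x2 : F[X]))) a₀
    show a₀ * -((a₁ * (x1 : F[X]) + a₂ * (X ^ db + (x2 : F[X]))) /ₘ a₀)
        + a₁ * (x1 : F[X]) + a₂ * (X ^ db + (x2 : F[X])) = 0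
    linear_combination hP - e
  let g : {x : ↥(degreeLT F db) × ↥(degreeLT F db) // T x = c} →
      {R : F[X] × F[X] × F[X] // R ∈ Rset F db ∧ a₀ * R.1 + a₁ * R.2.1 + a₂ * R.2.2 = 0} :=
    fun x => ⟨_, main x⟩
  have hginj : Function.Injective g := by
    rintro ⟨⟨x1, x2⟩, hx⟩ ⟨⟨y1, y2⟩, hy⟩ h
    have h1 : (x1 : F[X]) = (y1 : F[X]) := congrArg (fun z => z.1.2.1) h
    have h2 : (X : F[X]) ^ db + (x2 : F[X]) = X ^ db + (y2 : F[X]) :=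
      congrArg (fun z => z.1.2.2) h
    apply Subtype.ext
    exact Prod.ext (Subtype.ext h1) (Subtype.ext (add_left_cancel h2))
  have hgsurj : Function.Surjective g := by
    rintro ⟨⟨R1, R2, R3⟩, ⟨hmon', hdeg', hr0deg', hr1deg'⟩, heq⟩
    have hR3ne : R3 ≠ 0 := hmon'.ne_zero
    have hR3deg : R3.degree = (db : WithBot ℕ) := by
      rw [degree_eq_natDegree hR3ne, hdeg']
    have hdd : R3.degree = ((X : F[X]) ^ db).degree := by rw [hR3deg, degree_X_pow]
    have hlc : R3.leadingCoeff = ((X : F[X]) ^ db).leadingCoeff := by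
      rw [hmon'.leadingCoeff, leadingCoeff_X_pow]
    have hsdeg : (R3 - X ^ db).degree < (db : WithBot ℕ) := by
      have h := degree_sub_lt hdd hR3ne hlc
      rwa [hR3deg] at h
    have hw : a₁ * R2 + a₂ * (X ^ db + (R3 - X ^ db)) = a₀ * (-R1) := by
      linear_combination heq
    refine ⟨⟨(⟨R2, mem_degreeLT.mpr hr1deg'⟩, ⟨R3 - X ^ db, mem_degreeLT.mpr hsdeg⟩), ?_⟩, ?_⟩
    · rw [hwmod]
      show (a₁ * R2 + a₂ * (X ^ db + (R3 - X ^ db))) %ₘ a₀ = 0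
      rw [hw]
      exact (modByMonic_eq_zero_iff_dvd ha0mon).mpr (Dvd.intro _ rfl)
    · apply Subtype.ext
      show (-((a₁ * R2 + a₂ * (X ^ db + (R3 - X ^ db))) /ₘ a₀),
        (R2, X ^ db + (R3 - X ^ db))) = (R1, R2, R3)
      have hdiv : (a₁ * R2 + a₂ * (X ^ db + (R3 - X ^ db))) /ₘ a₀ = -R1 := by
        rw [hw, mul_divByMonic_cancel_left _ ha0mon]
      rw [hdiv, neg_neg]
      have h3 : (X : F[X]) ^ db + (R3 - X ^ db) = R3 := by ring
      rw [h3]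
  rw [← Nat.card_congr (Equiv.ofBijective g ⟨hginj, hgsurj⟩),
    aux_fiber_card T hTsurj c, Module.finrank_prod]
  rw [aux_degLT_finrank, aux_degLT_finrank]

theorem stmt_6 (F : Type*) [Field F] [Fintype F] [DecidableEq F] (q : ℕ) (hq : q = Fintype.card F)
    (da db : ℕ) (h1 : 1 ≤ da) (h2 : da ≤ db)
    (Q : F[X] × F[X] × F[X]) (hQ : Q ∈ Qset F da)
    (δ : ℕ) (hδ : δ = (gcd Q.1 (gcd Q.2.1 Q.2.2)).natDegree) :
    Set.ncard {R : F[X] × F[X] × F[X] | R ∈ Rset F db ∧ Intersecting Q R} =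
      q ^ (2 * db - da + δ) := by
  obtain ⟨hmon, hdeg, hq1deg, hq2deg⟩ := hQ
  have hq0ne : Q.1 ≠ 0 := hmon.ne_zero
  set G : F[X] := gcd Q.1 (gcd Q.2.1 Q.2.2) with hGdef
  have hGne : G ≠ 0 := by
    intro h
    rw [hGdef, gcd_eq_zero_iff] at h
    exact hq0ne h.1
  have hGmon : G.Monic := by
    have h : normalize G = G := normalize_gcd Q.1 (gcd Q.2.1 Q.2.2)
    rw [← h]; exact monic_normalize hGne
  obtain ⟨a₀, ha0⟩ : G ∣ Q.1 := gcd_dvd_left _ _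
  obtain ⟨a₁, ha1⟩ : G ∣ Q.2.1 := (gcd_dvd_right _ _).trans (gcd_dvd_left _ _)
  obtain ⟨a₂, ha2⟩ : G ∣ Q.2.2 := (gcd_dvd_right _ _).trans (gcd_dvd_right _ _)
  have ha0mon : a₀.Monic := hGmon.of_mul_monic_left (ha0 ▸ hmon)
  have ha0ne : a₀ ≠ 0 := ha0mon.ne_zero
  have hdam : da = δ + a₀.natDegree := by
    rw [← hdeg, ha0, natDegree_mul hGne ha0ne, hδ]
  have hdegG : G.degree = (δ : WithBot ℕ) := by
    rw [degree_eq_natDegree hGne, hδ]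
  have hadeg : ∀ p b : F[X], p = G * b → p.degree < (da : WithBot ℕ) →
      b.degree < (a₀.natDegree : WithBot ℕ) := by
    intro p b hpb hp
    rw [hpb, degree_mul, hdegG] at hp
    have hda' : (da : WithBot ℕ) = (δ : WithBot ℕ) + (a₀.natDegree : WithBot ℕ) := by
      rw [hdam, Nat.cast_add]
    rw [hda'] at hp
    exact (WithBot.add_lt_add_iff_left (WithBot.natCast_ne_bot δ)).mp hp
  have ha1deg := hadeg _ _ ha1 hq1deg
  have ha2deg := hadeg _ _ ha2 hq2deg
  have hcop : gcd a₀ (gcd a₁ a₂) = 1 := by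
    apply mul_left_cancel₀ hGne
    rw [mul_one]
    conv_rhs => rw [hGdef]
    rw [ha0, ha1, ha2, gcd_mul_left G a₁ a₂, hGmon.normalize_eq_self,
      gcd_mul_left G a₀ (gcd a₁ a₂), hGmon.normalize_eq_self]
  have hbez : ∃ u v w : F[X], u * a₀ + v * a₁ + w * a₂ = 1 := by
    obtain ⟨u, v, huv⟩ := (gcd_isUnit_iff a₀ (gcd a₁ a₂)).mp (by rw [hcop]; exact isUnit_one)
    obtain ⟨xx, yy, hxy⟩ := exists_gcd_eq_mul_add_mul a₁ a₂
    exact ⟨u, v * xx, v * yy, by linear_combination huv - v * hxy⟩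
  have hset : {R : F[X] × F[X] × F[X] | R ∈ Rset F db ∧ Intersecting Q R} =
      {R : F[X] × F[X] × F[X] | R ∈ Rset F db ∧ a₀ * R.1 + a₁ * R.2.1 + a₂ * R.2.2 = 0} := by
    ext R
    simp only [Set.mem_setOf_eq, and_congr_right_iff]
    intro _
    constructor
    · intro h
      have h' : Q.1 * R.1 + Q.2.1 * R.2.1 + Q.2.2 * R.2.2 = 0 := h
      have hz : G * (a₀ * R.1 + a₁ * R.2.1 + a₂ * R.2.2) = 0 := by
        linear_combination h' - R.1 * ha0 - R.2.1 * ha1 - R.2.2 * ha2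
      exact (mul_eq_zero.mp hz).resolve_left hGne
    · intro h
      show Q.1 * R.1 + Q.2.1 * R.2.1 + Q.2.2 * R.2.2 = 0
      linear_combination G * h + R.1 * ha0 + R.2.1 * ha1 + R.2.2 * ha2
  rw [hset]
  have hmdb : a₀.natDegree ≤ db := by omega
  have hmain := aux_count_main a₀ a₁ a₂ ha0mon db hmdb ha1deg ha2deg hbez
  have hnc : {R : F[X] × F[X] × F[X] |
        R ∈ Rset F db ∧ a₀ * R.1 + a₁ * R.2.1 + a₂ * R.2.2 = 0}.ncard =
      Nat.card {R : F[X] × F[X] × F[X] //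
        R ∈ Rset F db ∧ a₀ * R.1 + a₁ * R.2.1 + a₂ * R.2.2 = 0} := rfl
  rw [hnc, hmain, hq]
  congr 1
  omega
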